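/- Let n ≥ 1 and let Z_1, …, Z_n be exchangeable real random variables that are almost surely distinct. For any α ∈ (0, 1) with ⌊αn⌋ ≥ 1, P(Z_n > Z_{(⌊αn⌋, n)}) ≤ 1 − α + 1/n, where Z_{(⌊αn⌋, n)} is the ⌊αn⌋-th smallest value among Z_1, …, Z_n. -/

import Mathlib

open MeasureTheory Filter

/-- The `k`-th smallest value (1-indexed) among `v 0, …, v (n-1)`,
counted with multiplicity. -/
noncomputable def kthSmallest {n : ℕ} (v : Fin n → ℝ) (k : ℕ) : ℝ :=
  if h : k - 1 < n then v (Tuple.sort v ⟨k - 1, h⟩) else 0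

/-- Real random variables `Z 0, …, Z (m-1)` are exchangeable if for every
permutation `σ` of the indices, the permuted vector has the same joint law. -/
def Exchangeable {Ω : Type*} [MeasurableSpace Ω] (P : Measure Ω) {m : ℕ}
    (Z : Fin m → Ω → ℝ) : Prop :=
  ∀ σ : Equiv.Perm (Fin m),
    Measure.map (fun ω => fun i => Z (σ i) ω) P = Measure.map (fun ω => fun i => Z i ω) P

open Finset ENNReal

lemma rank_sort {n : ℕ} (v : Fin n → ℝ) (hv : Function.Injective v) (m : Fin n) :
    (Finset.univ.filter (fun i => v i < v (Tuple.sort v m))).card = m := by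
  set σ := Tuple.sort v with hσ
  have hsm : StrictMono (v ∘ σ) :=
    (Tuple.monotone_sort v).strictMono_of_injective (hv.comp σ.injective)
  have hcard : (Finset.univ.filter (fun i => v i < v (σ m))).card
      = (Finset.univ.filter (fun i : Fin n => i < m)).card := by
    refine Finset.card_equiv σ.symm (fun i => ?_)
    simp only [Finset.mem_filter, Finset.mem_univ, true_and]
    constructor
    · intro h
      have : (v ∘ σ) (σ.symm i) < (v ∘ σ) m := by simpa using h
      exact hsm.lt_iff_lt.mp this
    · intro h
      have : (v ∘ σ) (σ.symm i) < (v ∘ σ) m := hsm h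
      simpa using this
  rw [hcard]
  have : (Finset.univ.filter (fun i : Fin n => i < m)) = Finset.Iio m := by
    ext i; simp
  rw [this, Fin.card_Iio]

lemma rank_eq {n : ℕ} (v : Fin n → ℝ) (hv : Function.Injective v) (j : Fin n) :
    (Finset.univ.filter (fun i => v i < v j)).card = ((Tuple.sort v)⁻¹ j : ℕ) := by
  have := rank_sort v hv ((Tuple.sort v)⁻¹ j)
  simpa using this

theorem floor_quantiles_exchangeability_upper
    {Ω : Type*} [MeasurableSpace Ω] (P : Measure Ω) [IsProbabilityMeasure P]
    (n : ℕ) (hn : 1 ≤ n) (Z : Fin n → Ω → ℝ) (hmeas : ∀ i, Measurable (Z i))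
    (hexch : Exchangeable P Z)
    (hdist : ∀ i j, i ≠ j → P {ω | Z i ω = Z j ω} = 0)
    (α : ℝ) (hα : α ∈ Set.Ioo (0 : ℝ) 1) (hfloor : 1 ≤ ⌊α * (n : ℝ)⌋₊) :
    (P {ω | kthSmallest (fun i => Z i ω) ⌊α * (n : ℝ)⌋₊ <
        Z ⟨n - 1, by omega⟩ ω}).toReal ≤ 1 - α + 1 / n := by
  obtain ⟨hα0, hα1⟩ := hα
  set k := ⌊α * (n : ℝ)⌋₊ with hkdef
  have hkn : k < n := by
    have h1 : (k : ℝ) ≤ α * n := Nat.floor_le (by positivity)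
    have h2 : α * n < n := by
      have : (1:ℝ) ≤ n := by exact_mod_cast hn
      nlinarith
    exact_mod_cast h1.trans_lt h2
  set last : Fin n := ⟨n - 1, by omega⟩ with hlast
  set S : Set (Fin n → ℝ) :=
    {v | k ≤ (Finset.univ.filter (fun i => v i < v last)).card} with hSdef
  have hS : MeasurableSet S := by
    have hcard : Measurable
        (fun v : Fin n → ℝ => ((Finset.univ.filter (fun i => v i < v last)).card : ℕ)) := by
      simp_rw [Finset.card_filter]
      exact Finset.measurable_sum _ fun i _ =>
        Measurable.ite (measurableSet_lt (measurable_pi_apply i) (measurable_pi_apply last))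
          measurable_const measurable_const
    exact hcard (MeasurableSet.of_discrete (s := {m : ℕ | k ≤ m}))
  set C : Fin n → Set Ω :=
    fun j => {ω | k ≤ (Finset.univ.filter (fun i => Z i ω < Z j ω)).card} with hCdef
  have hvec : Measurable (fun ω => fun i => Z i ω) := measurable_pi_lambda _ hmeas
  have hClast : C last = (fun ω => fun i => Z i ω) ⁻¹' S := rfl
  -- C j as a preimage under the swapped vector
  have hCswap : ∀ j : Fin n, C j = (fun ω => fun i => Z ((Equiv.swap j last) i) ω) ⁻¹' S := by
    intro j
    ext ω
    simp only [hCdef, Set.mem_preimage, hSdef, Set.mem_setOf_eq]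
    have h2 : (Finset.univ.filter
          (fun i => Z ((Equiv.swap j last) i) ω < Z ((Equiv.swap j last) last) ω)).card
        = (Finset.univ.filter (fun i => Z i ω < Z j ω)).card := by
      rw [Equiv.swap_apply_right]
      exact (Finset.card_equiv (Equiv.swap j last) (fun i => by simp)).symm
    rw [h2]
  have hCmeas : ∀ j : Fin n, MeasurableSet (C j) := by
    intro j
    rw [hCswap j]
    exact (measurable_pi_lambda _ fun i => hmeas _) hS
  -- exchangeability: all C j have the same probability
  have hPC : ∀ j : Fin n, P (C j) = P (C last) := by
    intro j
    have hτvec : Measurable (fun ω => fun i => Z ((Equiv.swap j last) i) ω) :=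
      measurable_pi_lambda _ fun i => hmeas _
    rw [hCswap j, hClast, ← Measure.map_apply hτvec hS, ← Measure.map_apply hvec hS,
      hexch (Equiv.swap j last)]
  -- the a.s. distinctness set
  set D : Set Ω := {ω | Function.Injective fun i => Z i ω} with hDdef
  have hD_ae : ∀ᵐ ω ∂P, ω ∈ D := by
    have hsub : Dᶜ ⊆ ⋃ (i : Fin n) (j : Fin n) (_ : i ≠ j), {ω | Z i ω = Z j ω} := by
      intro ω hω
      simp only [hDdef, Set.mem_compl_iff, Set.mem_setOf_eq, Function.Injective, not_forall]
        at hω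
      obtain ⟨i, j, hval, hne⟩ := hω
      exact Set.mem_iUnion.2 ⟨i, Set.mem_iUnion.2 ⟨j, Set.mem_iUnion.2 ⟨hne, hval⟩⟩⟩
    have h0 : P Dᶜ = 0 := by
      refine measure_mono_null hsub ?_
      refine measure_iUnion_null fun i => measure_iUnion_null fun j => ?_
      by_cases hij : i = j
      · simp [hij]
      · simpa [hij] using hdist i j hij
    rw [ae_iff]
    exact h0
  -- counting: on D, exactly n - k of the events C j occur
  have hcount : ∀ ω ∈ D, (Finset.univ.filter (fun j => ω ∈ C j)).card = n - k := by
    intro ω hω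
    have hv : Function.Injective fun i => Z i ω := hω
    set σ := Tuple.sort (fun i => Z i ω) with hσ
    have hmem : ∀ j, ω ∈ C j ↔ k ≤ (σ⁻¹ j : ℕ) := by
      intro j
      simp only [hCdef, Set.mem_setOf_eq]
      rw [rank_eq _ hv j]
    have h2 : (Finset.univ.filter (fun j => ω ∈ C j)).card
        = (Finset.univ.filter (fun m : Fin n => k ≤ (m : ℕ))).card := by
      refine (Finset.card_equiv σ (fun m => ?_)).symm
      simp only [Finset.mem_filter, Finset.mem_univ, true_and, hmem]
      simp [Equiv.Perm.inv_def]
    rw [h2]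
    have h3 : (Finset.univ.filter (fun m : Fin n => k ≤ (m : ℕ)))
        = Finset.Ici (⟨k, hkn⟩ : Fin n) := by
      ext m; simp [Fin.le_def]
    rw [h3, Fin.card_Ici]
  -- sum of probabilities
  have hsum : (n : ℝ≥0∞) * P (C last) = ((n - k : ℕ) : ℝ≥0∞) := by
    have h1 : ∑ j : Fin n, P (C j) = (n : ℝ≥0∞) * P (C last) := by
      simp_rw [hPC]
      simp [Finset.sum_const, mul_comm]
    rw [← h1]
    have h2 : ∀ j : Fin n, P (C j) = ∫⁻ ω, (C j).indicator 1 ω ∂P :=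
      fun j => (lintegral_indicator_one (hCmeas j)).symm
    simp_rw [h2]
    rw [← lintegral_finset_sum _ (fun j _ => measurable_one.indicator (hCmeas j))]
    have h3 : ∫⁻ ω, ∑ j : Fin n, (C j).indicator 1 ω ∂P
        = ∫⁻ _, ((n - k : ℕ) : ℝ≥0∞) ∂P := by
      refine lintegral_congr_ae ?_
      filter_upwards [hD_ae] with ω hω
      have : ∑ j : Fin n, (C j).indicator (1 : Ω → ℝ≥0∞) ω
          = ((Finset.univ.filter (fun j => ω ∈ C j)).card : ℝ≥0∞) := by
        simp [Set.indicator_apply, Finset.sum_boole]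
      rw [this, hcount ω hω]
    rw [h3]
    simp
  -- identify the target event with C last, a.e.
  have hAeq : P {ω | kthSmallest (fun i => Z i ω) k < Z last ω} = P (C last) := by
    refine measure_congr ?_
    refine Filter.eventuallyEq_set.2 ?_
    filter_upwards [hD_ae] with ω hω
    have hv : Function.Injective fun i => Z i ω := hω
    set σ := Tuple.sort (fun i => Z i ω) with hσ
    have hsm : StrictMono ((fun i => Z i ω) ∘ σ) :=
      (Tuple.monotone_sort _).strictMono_of_injective (hv.comp σ.injective)
    have hk1 : k - 1 < n := by omega
    simp only [Set.mem_setOf_eq, kthSmallest, dif_pos hk1, hCdef]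
    rw [rank_eq _ hv last]
    have hlt : Z (σ ⟨k - 1, hk1⟩) ω < Z last ω ↔ (⟨k - 1, hk1⟩ : Fin n) < σ⁻¹ last := by
      constructor
      · intro h
        have : ((fun i => Z i ω) ∘ σ) ⟨k - 1, hk1⟩ < ((fun i => Z i ω) ∘ σ) (σ⁻¹ last) := by
          simpa using h
        exact hsm.lt_iff_lt.mp this
      · intro h
        have := hsm h
        simpa using this
    rw [hlt, Fin.lt_def]
    simp only [← hσ, Fin.val_mk]
    omega
  rw [hAeq]
  -- final arithmetic
  have hfin : (P (C last)).toReal = ((n - k : ℕ) : ℝ) / n := by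
    have hne : (P (C last)) ≠ ⊤ := measure_ne_top P _
    have := congrArg ENNReal.toReal hsum
    rw [ENNReal.toReal_mul] at this
    simp only [ENNReal.toReal_natCast] at this
    have hn0 : (n : ℝ) ≠ 0 := by positivity
    field_simp
    linarith [this]
  rw [hfin]
  have hcast : ((n - k : ℕ) : ℝ) = (n : ℝ) - k := by
    rw [Nat.cast_sub hkn.le]
  rw [hcast]
  have hflt : α * n < k + 1 := Nat.lt_floor_add_one _
  have hn1 : (1:ℝ) ≤ n := by exact_mod_cast hn
  rw [div_le_iff₀ (by positivity : (0:ℝ) < n)]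
  have h1n : (1 / (n:ℝ)) * n = 1 := by field_simp
  nlinarith [hflt, h1n]
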